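/- arXiv:2303.02294 — 5 statements merged into one kernel-verified Lean document; each statement's English description precedes it below -/
import Mathlib

section
/- Let A, A' be convex bodies in ℝⁿ with A ⊆ A'. For ε ≥ 0 define T_A(ε) as the infimum of all μ ≥ 0 such that (A ⊖ εB) + μB ⊇ A, where B is the closed unit ball, ⊖ denotes Minkowski erosion (inner parallel body) and + Minkowski sum. Then T_{A'}(ε) ≤ T_A(ε) + d_H(A, A'), where d_H is the Hausdorff distance. -/
/-- Inner parallel body (Minkowski erosion by the ball of radius `ε`):
`A ⊖ εB = {x : x + εB ⊆ A} = {x : closedBall x ε ⊆ A}`. -/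
def innerParallel {n : ℕ} (A : Set (EuclideanSpace ℝ (Fin n))) (ε : ℝ) :
    Set (EuclideanSpace ℝ (Fin n)) :=
  {x | Metric.closedBall x ε ⊆ A}

/-- Minkowski dilation of a set by the ball of radius `μ`. -/
def dilation {n : ℕ} (A : Set (EuclideanSpace ℝ (Fin n))) (μ : ℝ) :
    Set (EuclideanSpace ℝ (Fin n)) :=
  {x | ∃ y ∈ A, dist x y ≤ μ}

/-- `T_A(ε)`: the least `μ ≥ 0` with `(A ⊖ εB) + μB ⊇ A`. -/
noncomputable def TErosion {n : ℕ} (A : Set (EuclideanSpace ℝ (Fin n))) (ε : ℝ) : ℝ :=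
  sInf {μ : ℝ | 0 ≤ μ ∧ A ⊆ dilation (innerParallel A ε) μ}

theorem stmt_2 {n : ℕ} (A A' : Set (EuclideanSpace ℝ (Fin n)))
    (hAc : IsCompact A) (hAconv : Convex ℝ A) (hAint : (interior A).Nonempty)
    (hA'c : IsCompact A') (hA'conv : Convex ℝ A') (hA'int : (interior A').Nonempty)
    (hsub : A ⊆ A') (ε : ℝ) (hε : 0 ≤ ε)
    (hne : (innerParallel A ε).Nonempty) :
    TErosion A' ε ≤ TErosion A ε + Metric.hausdorffDist A A' := by
  set δ := Metric.hausdorffDist A A' with hδdef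
  have hδ0 : 0 ≤ δ := Metric.hausdorffDist_nonneg
  obtain ⟨x0, hx0⟩ := hne
  have hAne : A.Nonempty := ⟨x0, hx0 (Metric.mem_closedBall_self hε)⟩
  have hA'ne : A'.Nonempty := hAne.mono hsub
  -- S_A is nonempty
  obtain ⟨R, hR⟩ := hAc.isBounded.subset_closedBall x0
  have hSne : {μ : ℝ | 0 ≤ μ ∧ A ⊆ dilation (innerParallel A ε) μ}.Nonempty := by
    refine ⟨max R 0, le_max_right _ _, fun x hx => ⟨x0, hx0, ?_⟩⟩
    exact le_trans (hR hx) (le_max_left _ _)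
  have hSbdd : BddBelow {μ : ℝ | 0 ≤ μ ∧ A ⊆ dilation (innerParallel A ε) μ} :=
    ⟨0, fun μ hμ => hμ.1⟩
  have hS'bdd : BddBelow {μ : ℝ | 0 ≤ μ ∧ A' ⊆ dilation (innerParallel A' ε) μ} :=
    ⟨0, fun μ hμ => hμ.1⟩
  have hedist : EMetric.hausdorffEdist A A' ≠ ⊤ :=
    Metric.hausdorffEdist_ne_top_of_nonempty_of_bounded hAne hA'ne
      hAc.isBounded hA'c.isBounded
  -- erosion monotone
  have hmono : innerParallel A ε ⊆ innerParallel A' ε :=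
    fun x hx => Set.Subset.trans hx hsub
  rw [TErosion, TErosion]
  rw [← sub_le_iff_le_add]
  apply le_csInf hSne
  intro μ hμ
  rw [sub_le_iff_le_add]
  apply csInf_le hS'bdd
  constructor
  · exact add_nonneg hμ.1 hδ0
  · intro x hx
    -- x ∈ A', find y ∈ A with dist x y ≤ δ
    have hinf : Metric.infDist x A ≤ δ := by
      rw [hδdef, Metric.hausdorffDist_comm]
      exact Metric.infDist_le_hausdorffDist_of_mem hx (by rw [EMetric.hausdorffEdist_comm]; exact hedist)
    obtain ⟨y, hyA, hy⟩ := hAc.exists_infDist_eq_dist hAne x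
    have hxy : dist x y ≤ δ := by rw [← hy]; exact hinf
    obtain ⟨z, hz, hyz⟩ := hμ.2 hyA
    exact ⟨z, hmono hz, le_trans (dist_triangle x y z) (by linarith)⟩
end

section
/- A strictly convex body in ℝⁿ has a unique inscribed ball: if two closed balls of radius r(K) (the inradius) are contained in K, they coincide. -/
/-- The inradius of a set: the supremum of radii of closed balls contained in it. -/
noncomputable def inradius {n : ℕ} (K : Set (EuclideanSpace ℝ (Fin n))) : ℝ :=
  sSup {r : ℝ | ∃ c, Metric.closedBall c r ⊆ K}

theorem stmt_6 {n : ℕ} (K : Set (EuclideanSpace ℝ (Fin n)))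
    (hKc : IsCompact K) (hKconv : Convex ℝ K) (hKint : (interior K).Nonempty)
    (hstrict : ∀ x ∈ K, ∀ y ∈ K, x ≠ y → ∀ t : ℝ, t ∈ Set.Ioo (0:ℝ) 1 →
      t • x + (1 - t) • y ∈ interior K)
    (c₁ c₂ : EuclideanSpace ℝ (Fin n))
    (h₁ : Metric.closedBall c₁ (inradius K) ⊆ K)
    (h₂ : Metric.closedBall c₂ (inradius K) ⊆ K) :
    Metric.closedBall c₁ (inradius K) = Metric.closedBall c₂ (inradius K) := by
  rcases Nat.eq_zero_or_pos n with hn | hn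
  · subst hn
    haveI : Subsingleton (EuclideanSpace ℝ (Fin 0)) := inferInstance
    rw [Subsingleton.elim c₁ c₂]
  -- n ≥ 1 case
  set S : Set ℝ := {r : ℝ | ∃ c, Metric.closedBall c r ⊆ K} with hS
  -- K is bounded
  obtain ⟨R, hR⟩ := (Metric.isBounded_iff_subset_closedBall 0).mp hKc.isBounded
  -- unit vector
  set u : EuclideanSpace ℝ (Fin n) := EuclideanSpace.single ⟨0, hn⟩ (1:ℝ) with hu
  have hnormu : ‖u‖ = 1 := by simp [hu, EuclideanSpace.norm_single]
  -- S is bounded above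
  have hbdd : BddAbove S := by
    refine ⟨2 * |R| + 1, fun r' hr' => ?_⟩
    obtain ⟨c, hc⟩ := hr'
    rcases le_or_gt r' 0 with h | h
    · have : (0:ℝ) ≤ 2 * |R| + 1 := by positivity
      linarith
    · have hc1 : c ∈ K := hc (Metric.mem_closedBall_self h.le)
      have hc2 : c + r' • u ∈ K := by
        apply hc
        rw [Metric.mem_closedBall, dist_eq_norm]
        simp [norm_smul, hnormu, abs_of_pos h]
      have hb1 : ‖c‖ ≤ R := by simpa [dist_eq_norm] using hR hc1
      have hb2 : ‖c + r' • u‖ ≤ R := by simpa [dist_eq_norm] using hR hc2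
      have : r' = ‖(c + r' • u) - c‖ := by
        simp [norm_smul, hnormu, abs_of_pos h]
      have hle : ‖(c + r' • u) - c‖ ≤ ‖c + r' • u‖ + ‖c‖ := norm_sub_le _ _
      have hRabs : R ≤ |R| := le_abs_self R
      linarith
  -- the inradius is positive
  obtain ⟨x₀, hx₀⟩ := hKint
  obtain ⟨ε₀, hε₀, hball⟩ := Metric.isOpen_iff.mp isOpen_interior x₀ hx₀
  have hmem : ε₀ / 2 ∈ S := by
    exact ⟨x₀, (Metric.closedBall_subset_ball (by linarith)).trans
      (hball.trans interior_subset)⟩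
  have hrpos : 0 < inradius K := lt_of_lt_of_le (by linarith) (le_csSup hbdd hmem)
  set r := inradius K with hr
  -- suppose c₁ ≠ c₂
  by_cases hcc : c₁ = c₂
  · rw [hcc]
  exfalso
  set m : EuclideanSpace ℝ (Fin n) := (1/2 : ℝ) • c₁ + (1/2 : ℝ) • c₂ with hm
  have hsub : Metric.closedBall m r ⊆ interior K := by
    intro x hx
    set v := x - m with hv
    have hvnorm : ‖v‖ ≤ r := by
      rw [hv]
      simpa [dist_eq_norm] using Metric.mem_closedBall.mp hx
    have ha : c₁ + v ∈ K := h₁ (by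
      rw [Metric.mem_closedBall, dist_eq_norm]; simpa using hvnorm)
    have hb : c₂ + v ∈ K := h₂ (by
      rw [Metric.mem_closedBall, dist_eq_norm]; simpa using hvnorm)
    have hne : c₁ + v ≠ c₂ + v := by
      intro h; exact hcc (by simpa using h)
    have hx' : x = (1/2 : ℝ) • (c₁ + v) + (1 - 1/2 : ℝ) • (c₂ + v) := by
      have : x = m + v := by rw [hv]; abel
      rw [this, hm]
      norm_num
      module
    rw [hx']
    exact hstrict _ ha _ hb hne (1/2) (by norm_num)
  obtain ⟨δ, hδ, hδsub⟩ :=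
    (isCompact_closedBall m r).exists_cthickening_subset_open isOpen_interior hsub
  have hthick : Metric.closedBall m (δ + r) ⊆ K := by
    rw [← cthickening_closedBall hδ.le hrpos.le]
    exact hδsub.trans interior_subset
  have : δ + r ≤ r := le_csSup hbdd ⟨m, hthick⟩
  linarith
end

section
/- Let γ₁, …, γ_m ∈ [0, γ*] with γ* ∈ (0, π) and ∑ᵢ γᵢ = 2γ*. Then ∑ᵢ tan(γᵢ/2) ≤ 2 tan(γ*/2), with equality if and only if m of the γᵢ consist of exactly two values equal to γ* and the rest equal to 0. -/
open Real

lemma tan_strictConvexOn : StrictConvexOn ℝ (Set.Ico 0 (π/2)) Real.tan := by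
  apply StrictMonoOn.strictConvexOn_of_deriv (convex_Ico _ _)
  · apply Real.continuousOn_tan.mono
    intro x hx
    exact (Real.cos_pos_of_mem_Ioo ⟨by linarith [hx.1, Real.pi_div_two_pos], hx.2⟩).ne'
  · rw [interior_Ico]
    intro x hx y hy hxy
    rw [Real.deriv_tan, Real.deriv_tan]
    have hcy : 0 < Real.cos y := Real.cos_pos_of_mem_Ioo ⟨by linarith [hy.1, Real.pi_div_two_pos], hy.2⟩
    have hcx : Real.cos y < Real.cos x :=
      Real.cos_lt_cos_of_nonneg_of_le_pi (le_of_lt hx.1) (by linarith [hy.2, Real.pi_pos]) hxy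
    have : Real.cos y ^ 2 < Real.cos x ^ 2 := by nlinarith
    apply one_div_lt_one_div_of_lt (by positivity) this

lemma tan_key {s t : ℝ} (hs0 : 0 < s) (hs : s < π/2) (ht0 : 0 < t) (hts : t < s) :
    Real.tan t < (t / s) * Real.tan s := by
  have h0mem : (0:ℝ) ∈ Set.Ico 0 (π/2) := ⟨le_refl 0, by linarith⟩
  have hsmem : s ∈ Set.Ico 0 (π/2) := ⟨hs0.le, hs⟩
  have ha : (0:ℝ) < 1 - t/s := by
    have := (div_lt_one hs0).2 hts; linarith
  have hb : (0:ℝ) < t/s := by positivity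
  have hab : (1 - t/s) + t/s = 1 := by ring
  have h := tan_strictConvexOn.2 h0mem hsmem hs0.ne ha hb hab
  have he : (1 - t/s) • (0:ℝ) + (t/s) • s = t := by
    simp only [smul_eq_mul, mul_zero, zero_add]
    field_simp
  rw [he] at h
  simpa [Real.tan_zero, smul_eq_mul] using h

theorem stmt_12 (m : ℕ) (γ : Fin m → ℝ) (γs : ℝ)
    (hγs : γs ∈ Set.Ioo 0 π)
    (hnonneg : ∀ i, 0 ≤ γ i) (hle : ∀ i, γ i ≤ γs)
    (hsum : ∑ i, γ i = 2 * γs) :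
    (∑ i, Real.tan (γ i / 2)) ≤ 2 * Real.tan (γs / 2) ∧
    ((∑ i, Real.tan (γ i / 2)) = 2 * Real.tan (γs / 2) ↔
      ∃ i j : Fin m, i ≠ j ∧ γ i = γs ∧ γ j = γs ∧
        ∀ k, k ≠ i → k ≠ j → γ k = 0) := by
  obtain ⟨hγs0, hγsπ⟩ := hγs
  have hs0 : 0 < γs / 2 := by linarith
  have hsπ : γs / 2 < π / 2 := by linarith
  have htans : 0 < Real.tan (γs / 2) := Real.tan_pos_of_pos_of_lt_pi_div_two hs0 hsπ
  -- pointwise bound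
  have hpt : ∀ i, Real.tan (γ i / 2) ≤ (γ i / γs) * Real.tan (γs / 2) := by
    intro i
    rcases eq_or_lt_of_le (hnonneg i) with h0 | h0
    · simp [← h0]
    rcases eq_or_lt_of_le (hle i) with h1 | h1
    · rw [h1, div_self hγs0.ne', one_mul]
    · have := tan_key hs0 hsπ (by linarith : 0 < γ i / 2) (by linarith : γ i / 2 < γs / 2)
      calc Real.tan (γ i / 2) ≤ (γ i / 2) / (γs / 2) * Real.tan (γs / 2) := this.le
        _ = (γ i / γs) * Real.tan (γs / 2) := by
          congr 1
          field_simp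
  have hptstrict : ∀ i, 0 < γ i → γ i < γs →
      Real.tan (γ i / 2) < (γ i / γs) * Real.tan (γs / 2) := by
    intro i h0 h1
    have := tan_key hs0 hsπ (by linarith : 0 < γ i / 2) (by linarith : γ i / 2 < γs / 2)
    calc Real.tan (γ i / 2) < (γ i / 2) / (γs / 2) * Real.tan (γs / 2) := this
      _ = (γ i / γs) * Real.tan (γs / 2) := by
        congr 1
        field_simp
  have hsumbound : ∑ i, (γ i / γs) * Real.tan (γs / 2) = 2 * Real.tan (γs / 2) := by
    rw [← Finset.sum_mul, ← Finset.sum_div, hsum]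
    field_simp
  have hineq : (∑ i, Real.tan (γ i / 2)) ≤ 2 * Real.tan (γs / 2) := by
    rw [← hsumbound]
    exact Finset.sum_le_sum fun i _ => hpt i
  refine ⟨hineq, ?_, ?_⟩
  · -- equality → structure
    intro heq
    have hall : ∀ i, γ i = 0 ∨ γ i = γs := by
      by_contra h
      push_neg at h
      obtain ⟨i, hi0, hi1⟩ := h
      have hstrict : (∑ i, Real.tan (γ i / 2)) < ∑ i, (γ i / γs) * Real.tan (γs / 2) :=
        Finset.sum_lt_sum (fun j _ => hpt j)
          ⟨i, Finset.mem_univ i,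
            hptstrict i (lt_of_le_of_ne (hnonneg i) (Ne.symm hi0))
              (lt_of_le_of_ne (hle i) hi1)⟩
      rw [hsumbound] at hstrict
      linarith [heq ▸ hstrict]
    classical
    set S := Finset.univ.filter (fun i => γ i = γs) with hS
    have hsum2 : ∑ i, γ i = S.card * γs := by
      rw [← Finset.sum_filter_add_sum_filter_not Finset.univ (fun i => γ i = γs)]
      have h1 : ∑ i ∈ Finset.univ.filter (fun i => γ i = γs), γ i = S.card * γs := by
        rw [Finset.sum_congr rfl (fun i hi => (Finset.mem_filter.1 hi).2),
          Finset.sum_const, nsmul_eq_mul]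
      have h2 : ∑ i ∈ Finset.univ.filter (fun i => ¬ γ i = γs), γ i = 0 := by
        apply Finset.sum_eq_zero
        intro i hi
        rcases hall i with h | h
        · exact h
        · exact absurd h (Finset.mem_filter.1 hi).2
      rw [h1, h2, add_zero]
    have hcard : S.card = 2 := by
      have : (S.card : ℝ) * γs = 2 * γs := by rw [← hsum2, hsum]
      have := mul_right_cancel₀ hγs0.ne' this
      exact_mod_cast this
    obtain ⟨i, j, hij, hSij⟩ := Finset.card_eq_two.1 hcard
    have hiS : i ∈ S := by rw [hSij]; simp
    have hjS : j ∈ S := by rw [hSij]; simp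
    refine ⟨i, j, hij, (Finset.mem_filter.1 hiS).2, (Finset.mem_filter.1 hjS).2, ?_⟩
    intro k hki hkj
    rcases hall k with h | h
    · exact h
    · exfalso
      have : k ∈ S := Finset.mem_filter.2 ⟨Finset.mem_univ k, h⟩
      rw [hSij] at this
      simp at this
      tauto
  · -- structure → equality
    rintro ⟨i, j, hij, hi, hj, hrest⟩
    classical
    have : ∑ k, Real.tan (γ k / 2) = ∑ k ∈ ({i, j} : Finset (Fin m)), Real.tan (γ k / 2) := by
      symm
      apply Finset.sum_subset (Finset.subset_univ _)
      intro k _ hk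
      simp only [Finset.mem_insert, Finset.mem_singleton, not_or] at hk
      rw [hrest k hk.1 hk.2, zero_div, Real.tan_zero]
    rw [this, Finset.sum_pair hij, hi, hj]
    ring
end

section
/- For h ∈ (0,1) fixed and n → ∞, the integral J(n) = ∫₀^{1−√(1−h²)} (1 − (x + √(1−h²))²)^{(n−3)/2} dx satisfies J(n) = (h^{n−1}/√(1−h²)) · n^{−1} · (1 + O(1/n)). In particular, lim_{n→∞} J(n) · n · h^{−(n−1)} = 1/√(1−h²). -/
open Real Filter Asymptotics

/-- The lens-cap surface-area integral `J(n)`. -/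
noncomputable def lensIntegral (h : ℝ) (n : ℕ) : ℝ :=
  ∫ x in (0:ℝ)..(1 - Real.sqrt (1 - h ^ 2)),
    (1 - (x + Real.sqrt (1 - h ^ 2)) ^ 2) ^ (((n : ℝ) - 3) / 2)

lemma aux_integral (c q : ℝ) (hq : 0 ≤ q) :
    ∫ u in c..1, u * (1 - u ^ 2) ^ q = (1 - c ^ 2) ^ (q + 1) / (2 * (q + 1)) := by
  have hq1 : (0:ℝ) < q + 1 := by linarith
  have hcont : Continuous fun u : ℝ => u * (1 - u ^ 2) ^ q :=
    continuous_id.mul ((continuous_const.sub (continuous_pow 2)).rpow_const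
      fun x => Or.inr hq)
  rw [intervalIntegral.integral_eq_sub_of_hasDerivAt (f := fun u : ℝ =>
      -((1 - u ^ 2) ^ (q + 1) / (2 * (q + 1)))) ?_ (hcont.intervalIntegrable c 1)]
  · rw [show (1:ℝ) - 1 ^ 2 = 0 by norm_num, Real.zero_rpow hq1.ne']
    ring
  · intro u _
    have h1 : HasDerivAt (fun u : ℝ => 1 - u ^ 2) (-(2 * u)) u := by
      simpa using ((hasDerivAt_pow 2 u).const_sub 1)
    have h3 := ((h1.rpow_const (p := q + 1)
      (Or.inr (by linarith))).div_const (2 * (q + 1))).neg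
    convert h3 using 1
    · rfl
    rw [add_sub_cancel_right]
    field_simp

lemma rpow_sq_half (h x : ℝ) (h0 : 0 < h) : ((h ^ 2 : ℝ)) ^ (x / 2) = h ^ x := by
  rw [← Real.rpow_natCast h 2, ← Real.rpow_mul h0.le]
  congr 1
  push_cast
  ring

set_option maxHeartbeats 1000000 in
lemma main_bound (h : ℝ) (h0 : 0 < h) (h1 : h < 1) (n : ℕ) (hn : 4 ≤ n) :
    |lensIntegral h n - h ^ ((n:ℝ)-1) / Real.sqrt (1 - h^2) / n| ≤
      (2 + 2 / Real.sqrt (1-h^2) ^ 2) * (h ^ ((n:ℝ)-1) / Real.sqrt (1-h^2) / n / n) := by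
  set c := Real.sqrt (1 - h ^ 2) with hc_def
  have hh2 : 0 < 1 - h ^ 2 := by nlinarith
  have hc0 : 0 < c := Real.sqrt_pos.mpr hh2
  have hcsq : c ^ 2 = 1 - h ^ 2 := Real.sq_sqrt hh2.le
  have hc1 : c < 1 := by nlinarith [hcsq, hc0]
  set N : ℝ := (n : ℝ) with hN_def
  have hN : (4:ℝ) ≤ N := by simp only [hN_def]; exact_mod_cast hn
  set p : ℝ := (N - 3) / 2 with hp_def
  have hp0 : (0:ℝ) ≤ p := by rw [hp_def]; linarith
  have hp_pos : (0:ℝ) < p + 1 := by linarith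
  have hA2 : h ^ (N + 1) = h ^ (N - 1) * h ^ 2 := by
    rw [← Real.rpow_natCast h 2, ← Real.rpow_add h0]
    congr 1
    push_cast
    ring
  set A : ℝ := h ^ (N - 1) with hA_def
  have hA : 0 < A := Real.rpow_pos_of_pos h0 _
  -- continuity facts
  have hcont0 : Continuous fun u : ℝ => (1 - u ^ 2) ^ p :=
    (continuous_const.sub (continuous_pow 2)).rpow_const fun x => Or.inr hp0
  have hcont1 : Continuous fun u : ℝ => u * (1 - u ^ 2) ^ p :=
    continuous_id.mul hcont0
  have hcont2 : Continuous fun u : ℝ => u * (1 - u ^ 2) ^ (p + 1) :=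
    continuous_id.mul ((continuous_const.sub (continuous_pow 2)).rpow_const
      fun x => Or.inr (by linarith))
  -- change of variables
  have hJdef : lensIntegral h n = ∫ u in c..1, (1 - u ^ 2) ^ p := by
    unfold lensIntegral
    rw [intervalIntegral.integral_comp_add_right (a := 0) (b := 1 - c)
      (fun u => (1 - u ^ 2) ^ p) c, zero_add, sub_add_cancel]
  set J : ℝ := ∫ u in c..1, (1 - u ^ 2) ^ p with hJ_def
  -- the two explicit integrals
  have hpow1 : ((1:ℝ) - c ^ 2) ^ (p + 1) = A := by
    rw [hcsq, show (1:ℝ) - (1 - h ^ 2) = h ^ 2 by ring,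
      show p + 1 = (N - 1) / 2 by rw [hp_def]; ring, rpow_sq_half h (N-1) h0]
  have hI : (∫ u in c..1, u * (1 - u ^ 2) ^ p) = A / (N - 1) := by
    rw [aux_integral c p hp0, hpow1]
    rw [hp_def]; ring_nf
  have hpow2 : ((1:ℝ) - c ^ 2) ^ (p + 1 + 1) = A * h ^ 2 := by
    rw [hcsq, show (1:ℝ) - (1 - h ^ 2) = h ^ 2 by ring,
      show p + 1 + 1 = (N + 1) / 2 by rw [hp_def]; ring, rpow_sq_half h (N+1) h0, hA2]
  have hI2 : (∫ u in c..1, u * (1 - u ^ 2) ^ (p + 1)) = A * h ^ 2 / (N + 1) := by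
    rw [aux_integral c (p + 1) (by linarith), hpow2]
    rw [hp_def]; ring_nf
  have hN1 : (0:ℝ) < N - 1 := by linarith
  have hNpos : (0:ℝ) < N := by linarith
  -- upper bound
  have hJup : J ≤ A / (c * (N - 1)) := by
    have : J ≤ (1/c) * ∫ u in c..1, u * (1 - u ^ 2) ^ p := by
      rw [← intervalIntegral.integral_const_mul]
      apply intervalIntegral.integral_mono_on hc1.le
        (hcont0.intervalIntegrable c 1)
        ((continuous_const.mul hcont1).intervalIntegrable c 1)
      intro u hu
      have hX : (0:ℝ) ≤ (1 - u ^ 2) ^ p := Real.rpow_nonneg (by nlinarith [hu.1, hu.2, hc0]) _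
      have hcu : c * (1 - u ^ 2) ^ p ≤ u * (1 - u ^ 2) ^ p :=
        mul_le_mul_of_nonneg_right hu.1 hX
      show (1 - u ^ 2) ^ p ≤ (1/c) * (u * (1 - u ^ 2) ^ p)
      rw [show (1/c) * (u * (1 - u ^ 2) ^ p) = (u * (1 - u ^ 2) ^ p) / c by ring,
        le_div_iff₀ hc0]
      linarith [hcu]
    rw [hI] at this
    calc J ≤ 1/c * (A / (N - 1)) := this
      _ = A / (c * (N - 1)) := by field_simp
  -- lower bound
  have hJlow : A / (c * (N - 1)) - h ^ 2 * A / (c ^ 3 * (N - 1) * (N + 1)) ≤ J := by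
    have hmono : (∫ u in c..1, ((1/c) * (u * (1 - u ^ 2) ^ p)
        - (1/(2*c^3)) * (h^2 * (u * (1 - u ^ 2) ^ p) - u * (1 - u ^ 2) ^ (p+1)))) ≤ J := by
      apply intervalIntegral.integral_mono_on hc1.le
        (((continuous_const.mul hcont1).sub (continuous_const.mul
          ((continuous_const.mul hcont1).sub hcont2))).intervalIntegrable c 1)
        (hcont0.intervalIntegrable c 1)
      intro u hu
      have hbase : (0:ℝ) ≤ 1 - u ^ 2 := by nlinarith [hu.1, hu.2, hc0]
      set X : ℝ := (1 - u ^ 2) ^ p with hX_def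
      have hX : (0:ℝ) ≤ X := Real.rpow_nonneg hbase _
      have hXP : (1 - u ^ 2) ^ (p + 1) = (1 - u ^ 2) * X := by
        rcases eq_or_ne (1 - u ^ 2) 0 with hz | hz
        · rw [hz, Real.zero_rpow (by linarith), hX_def, hz,
            Real.zero_rpow (by rw [hp_def]; intro hq; nlinarith), mul_zero]
        · rw [Real.rpow_add_one hz, hX_def]; ring
      show (1/c) * (u * X) - (1/(2*c^3)) * (h^2 * (u * X) - u * (1 - u ^ 2) ^ (p+1)) ≤ X
      rw [hXP]
      have hkey : (2 * c^2 * (u - c) - u * (u - c) * (u + c)) * X ≤ 0 := by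
        apply mul_nonpos_of_nonpos_of_nonneg _ hX
        nlinarith [mul_nonneg (sq_nonneg (u - c))
          (show (0:ℝ) ≤ u + 2*c by linarith [hu.1, hc0])]
      have heq : (1/c) * (u * X) - (1/(2*c^3)) * (h^2 * (u * X) - u * ((1 - u^2) * X))
          = X + ((2 * c^2 * (u - c) - u * (u - c) * (u + c)) * X) / (2 * c^3) := by
        rw [show h ^ 2 = 1 - c ^ 2 by linarith [hcsq]]
        field_simp
        ring
      rw [heq]
      have hdiv : ((2 * c^2 * (u - c) - u * (u - c) * (u + c)) * X) / (2 * c^3) ≤ 0 :=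
        div_nonpos_of_nonpos_of_nonneg hkey (by positivity)
      linarith
    have e1 : (∫ u in c..1, (1/c) * (u * (1 - u ^ 2) ^ p)) = (1/c) * (A / (N-1)) := by
      rw [intervalIntegral.integral_const_mul, hI]
    have e2 : (∫ u in c..1, (h^2 * (u * (1 - u ^ 2) ^ p) - u * (1 - u ^ 2) ^ (p+1)))
        = h^2 * (A / (N-1)) - A * h^2 / (N+1) := by
      rw [intervalIntegral.integral_sub (f := fun u => h^2 * (u * (1 - u ^ 2) ^ p))
        (g := fun u => u * (1 - u ^ 2) ^ (p+1)) ((continuous_const.mul hcont1).intervalIntegrable c 1)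
        (hcont2.intervalIntegrable c 1), intervalIntegral.integral_const_mul, hI, hI2]
    have e3 : (∫ u in c..1, (1/(2*c^3)) * (h^2 * (u * (1 - u ^ 2) ^ p)
        - u * (1 - u ^ 2) ^ (p+1)))
        = (1/(2*c^3)) * (h^2 * (A / (N-1)) - A * h^2 / (N+1)) := by
      rw [intervalIntegral.integral_const_mul, e2]
    have e0 : (∫ u in c..1, ((1/c) * (u * (1 - u ^ 2) ^ p)
        - (1/(2*c^3)) * (h^2 * (u * (1 - u ^ 2) ^ p) - u * (1 - u ^ 2) ^ (p+1))))
        = (1/c) * (A / (N-1)) - (1/(2*c^3)) * (h^2 * (A / (N-1)) - A * h^2 / (N+1)) := by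
      rw [intervalIntegral.integral_sub (f := fun u => (1/c) * (u * (1 - u ^ 2) ^ p))
        (g := fun u => (1/(2*c^3)) * (h^2 * (u * (1 - u ^ 2) ^ p) - u * (1 - u ^ 2) ^ (p+1)))
        ((continuous_const.mul hcont1).intervalIntegrable c 1)
        ((continuous_const.mul ((continuous_const.mul hcont1).sub hcont2)).intervalIntegrable c 1),
        e1, e3]
    rw [e0] at hmono
    have : A / (c * (N - 1)) - h ^ 2 * A / (c ^ 3 * (N - 1) * (N + 1))
        = (1/c) * (A / (N-1)) - (1/(2*c^3)) * (h^2 * (A / (N-1)) - A * h^2 / (N+1)) := by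
      field_simp
      ring
    linarith [hmono, this.ge, this.le]
  -- final arithmetic
  rw [hJdef]
  rw [abs_sub_le_iff]
  have hR : (2 + 2/c^2) * (A / c / N / N) = ((2*c^2+2)*A)/(c^3*N*N) := by
    field_simp
  constructor
  · have expand : A / (c*(N-1)) - A / c / N = A / (c*N*(N-1)) := by
      field_simp; ring
    have key : A / (c*N*(N-1)) ≤ (2 + 2/c^2) * (A / c / N / N) := by
      rw [hR, div_le_div_iff₀ (by positivity) (by positivity)]
      nlinarith [mul_nonneg (mul_nonneg (mul_nonneg (pow_pos hc0 3).le hA.le) hNpos.le)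
          (show (0:ℝ) ≤ N - 2 by linarith),
        mul_nonneg (mul_nonneg hc0.le hA.le) (mul_nonneg hNpos.le (show (0:ℝ) ≤ N - 1 by linarith))]
    linarith [hJup, expand.le, expand.ge]
  · have t1 : A/c/N - A/(c*(N-1)) = -(A/(c*N*(N-1))) := by field_simp; ring
    have t1' : (0:ℝ) ≤ A/(c*N*(N-1)) := by positivity
    have t2 : h^2 * A / (c^3*(N-1)*(N+1)) ≤ (2 + 2/c^2) * (A / c / N / N) := by
      rw [hR, div_le_div_iff₀ (by positivity) (by positivity)]
      nlinarith [mul_nonneg (mul_nonneg (pow_pos hc0 3).le hA.le)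
          (show (0:ℝ) ≤ (1 - h^2) * (N*N) by nlinarith),
        mul_nonneg (mul_nonneg (pow_pos hc0 3).le hA.le)
          (show (0:ℝ) ≤ N*N - 2 by nlinarith),
        mul_nonneg (mul_nonneg (mul_nonneg hc0.le hc0.le) (mul_pos hc0 hA).le)
          (show (0:ℝ) ≤ N*N - 1 by nlinarith)]
    linarith [hJlow, t1.le, t1.ge]

theorem stmt_18 (h : ℝ) (hh : h ∈ Set.Ioo (0:ℝ) 1) :
    (fun n : ℕ => lensIntegral h n
        - h ^ ((n : ℝ) - 1) / Real.sqrt (1 - h ^ 2) / n)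
      =O[atTop] (fun n : ℕ => h ^ ((n : ℝ) - 1) / Real.sqrt (1 - h ^ 2) / n / n) ∧
    Tendsto (fun n : ℕ => lensIntegral h n * n / h ^ ((n : ℝ) - 1))
      atTop (nhds (1 / Real.sqrt (1 - h ^ 2))) := by
  obtain ⟨h0, h1⟩ := hh
  have hh2 : (0:ℝ) < 1 - h ^ 2 := by nlinarith
  have hc0 : 0 < Real.sqrt (1 - h ^ 2) := Real.sqrt_pos.mpr hh2
  constructor
  · apply IsBigO.of_bound (2 + 2 / Real.sqrt (1-h^2) ^ 2)
    filter_upwards [eventually_ge_atTop 4] with n hn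
    have hb := main_bound h h0 h1 n hn
    have hg : (0:ℝ) ≤ h ^ ((n:ℝ)-1) / Real.sqrt (1-h^2) / n / n := by positivity
    rw [Real.norm_eq_abs, Real.norm_eq_abs, abs_of_nonneg hg]
    exact hb
  · rw [← tendsto_sub_nhds_zero_iff]
    apply squeeze_zero_norm' (a := fun n : ℕ =>
      ((2 + 2 / Real.sqrt (1-h^2) ^ 2) / Real.sqrt (1-h^2)) * (1/(n:ℝ)))
    · filter_upwards [eventually_ge_atTop 4] with n hn
      have hb := main_bound h h0 h1 n hn
      have hn0 : (0:ℝ) < (n:ℝ) := by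
        have : (4:ℝ) ≤ (n:ℝ) := by exact_mod_cast hn
        linarith
      have hA : 0 < h ^ ((n:ℝ)-1) := Real.rpow_pos_of_pos h0 _
      have heq : lensIntegral h n * n / h^((n:ℝ)-1) - 1/Real.sqrt (1-h^2)
          = (lensIntegral h n - h^((n:ℝ)-1)/Real.sqrt (1-h^2)/n) * ((n:ℝ) / h^((n:ℝ)-1)) := by
        field_simp
      rw [Real.norm_eq_abs, heq, abs_mul,
        abs_of_nonneg (show (0:ℝ) ≤ (n:ℝ) / h^((n:ℝ)-1) by positivity)]
      calc |lensIntegral h n - h^((n:ℝ)-1)/Real.sqrt (1-h^2)/n| * ((n:ℝ) / h^((n:ℝ)-1))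
          ≤ ((2 + 2 / Real.sqrt (1-h^2) ^ 2) * (h ^ ((n:ℝ)-1) / Real.sqrt (1-h^2) / n / n))
            * ((n:ℝ) / h^((n:ℝ)-1)) := by
            apply mul_le_mul_of_nonneg_right hb (by positivity)
        _ = ((2 + 2 / Real.sqrt (1-h^2) ^ 2) / Real.sqrt (1-h^2)) * (1/(n:ℝ)) := by
            field_simp
    · have h2 : Tendsto (fun n : ℕ => 1/(n:ℝ)) atTop (nhds 0) :=
        tendsto_one_div_atTop_nhds_zero_nat
      have := h2.const_mul ((2 + 2 / Real.sqrt (1-h^2) ^ 2) / Real.sqrt (1-h^2))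
      simpa using this
end

section
/- Let K ⊆ ℝⁿ be a compact convex set containing a ball B of radius r > 0 centered at o, and suppose the set S = ∂B ∩ ∂K is contained in an open half-space {x : ⟨x − o, u⟩ > 0} for some unit vector u. Then B is not an inscribed ball of maximal radius: there exists ε > 0 and a point o' = o − εu such that the ball of radius r centered at o' is contained in the interior of K, hence r(K) > r. -/
open scoped RealInnerProductSpace

open Metric

theorem stmt_19 {n : ℕ} (K : Set (EuclideanSpace ℝ (Fin n)))
    (hKc : IsCompact K) (hKconv : Convex ℝ K) (hKint : (interior K).Nonempty)
    (o u : EuclideanSpace ℝ (Fin n)) (r : ℝ) (hr : 0 < r)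
    (hB : Metric.closedBall o r ⊆ K) (hu : ‖u‖ = 1)
    (hS : frontier (Metric.closedBall o r) ∩ frontier K ⊆
      {x : EuclideanSpace ℝ (Fin n) | 0 < ⟪x - o, u⟫}) :
    (∃ ε > (0:ℝ), Metric.closedBall (o - ε • u) r ⊆ interior K) ∧
      r < inradius K := by
  have hrne : r ≠ 0 := ne_of_gt hr
  have hball : Metric.ball o r ⊆ interior K := by
    rw [← interior_closedBall o hrne]
    exact interior_mono hB
  set T : Set (EuclideanSpace ℝ (Fin n)) :=
    Metric.sphere o r ∩ {x | ⟪x - o, u⟫ ≤ 0} with hT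
  have hTint : T ⊆ interior K := by
    rintro y ⟨hy1, hy2⟩
    have hyK : y ∈ K := hB (Metric.sphere_subset_closedBall hy1)
    by_contra h
    have hfr : y ∈ frontier K := by
      rw [hKc.isClosed.frontier_eq]
      exact ⟨hyK, h⟩
    have : 0 < ⟪y - o, u⟫ := hS ⟨by rw [frontier_closedBall o hrne]; exact hy1, hfr⟩
    exact absurd this (not_lt.2 hy2)
  have hTc : IsCompact T := (isCompact_sphere o r).inter_right
    (isClosed_le ((continuous_id.sub continuous_const).inner continuous_const) continuous_const)
  obtain ⟨δ, hδ, hth⟩ := hTc.exists_thickening_subset_open isOpen_interior hTint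
  set ε := δ / 2 with hε
  have hεpos : 0 < ε := by positivity
  have hmain : Metric.closedBall (o - ε • u) r ⊆ interior K := by
    intro x hx
    have hx' : ‖(x - o) + ε • u‖ ≤ r := by
      have h0 := mem_closedBall.1 hx
      rw [dist_eq_norm] at h0
      have he : x - (o - ε • u) = (x - o) + ε • u := by abel
      rwa [he] at h0
    by_cases hlt : ‖x - o‖ < r
    · exact hball (by simpa [mem_ball, dist_eq_norm] using hlt)
    · push_neg at hlt
      have hxo : 0 < ‖x - o‖ := lt_of_lt_of_le hr hlt
      -- inner product is negative
      have hinn : ⟪x - o, u⟫ < 0 := by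
        by_contra hge
        push_neg at hge
        have hsq : ‖(x - o) + ε • u‖ ^ 2 = ‖x - o‖ ^ 2 + 2 * (ε * ⟪x - o, u⟫) + ε ^ 2 := by
          rw [norm_add_sq_real, real_inner_smul_right, norm_smul, hu, Real.norm_eq_abs,
            abs_of_pos hεpos]
          ring
        have h1 : ‖(x - o) + ε • u‖ ^ 2 ≤ r ^ 2 :=
          pow_le_pow_left₀ (norm_nonneg _) hx' 2
        nlinarith
      -- the radial projection onto the sphere
      set t : ℝ := r / ‖x - o‖ with ht
      have htpos : 0 < t := div_pos hr hxo
      have ht1 : t ≤ 1 := (div_le_one hxo).2 hlt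
      set y : EuclideanSpace ℝ (Fin n) := o + t • (x - o) with hy
      have hyT : y ∈ T := by
        constructor
        · simp only [hy, mem_sphere, dist_eq_norm, add_sub_cancel_left, norm_smul,
            Real.norm_eq_abs, abs_of_pos htpos, ht]
          rw [abs_of_pos (div_pos hr hxo)]
          field_simp [hxo.ne']
        · simp only [Set.mem_setOf_eq, hy, add_sub_cancel_left, real_inner_smul_left]
          exact mul_nonpos_of_nonneg_of_nonpos htpos.le hinn.le
      have hxr : ‖x - o‖ ≤ r + ε := by
        have : ‖x - o‖ = ‖((x - o) + ε • u) - ε • u‖ := by rw [add_sub_cancel_right]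
        rw [this]
        calc ‖((x - o) + ε • u) - ε • u‖ ≤ ‖(x - o) + ε • u‖ + ‖ε • u‖ := norm_sub_le _ _
        _ ≤ r + ε := by
            rw [norm_smul, hu]
            simp [abs_of_pos hεpos]
            exact hx'
      have hdxy : dist x y < δ := by
        have h1 : x - y = (1 - t) • (x - o) := by
          rw [hy, sub_smul, one_smul]
          abel
        have h2 : dist x y = ‖x - o‖ - t * ‖x - o‖ := by
          rw [dist_eq_norm, h1, norm_smul, Real.norm_eq_abs, abs_of_nonneg (by linarith)]
          ring
        have h3 : t * ‖x - o‖ = r := by rw [ht]; field_simp [hxo.ne']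
        rw [h2, h3]
        calc ‖x - o‖ - r ≤ ε := by linarith
        _ < δ := by rw [hε]; linarith
      exact hth (Metric.mem_thickening_iff.2 ⟨y, hyT, hdxy⟩)
  refine ⟨⟨ε, hεpos, hmain⟩, ?_⟩
  -- inradius part
  obtain ⟨δ', hδ', hth'⟩ := (isCompact_closedBall (o - ε • u) r).exists_thickening_subset_open
    isOpen_interior hmain
  have hin : Metric.closedBall (o - ε • u) (r + δ' / 2) ⊆ K := by
    intro z hz
    have : z ∈ Metric.ball (o - ε • u) (δ' + r) := by
      rw [mem_ball]
      have := mem_closedBall.1 hz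
      linarith
    rw [← thickening_closedBall hδ' hr.le] at this
    exact (interior_subset : interior K ⊆ K) (hth' this)
  -- bdd above
  obtain ⟨R, hR⟩ := hKc.isBounded.subset_closedBall 0
  have hbdd : BddAbove {s : ℝ | ∃ c, Metric.closedBall c s ⊆ K} := by
    refine ⟨2 * max R 0, ?_⟩
    rintro s ⟨c, hc⟩
    by_cases hs : s ≤ 0
    · have : (0:ℝ) ≤ 2 * max R 0 := by positivity
      linarith
    · push_neg at hs
      have hc1 : c ∈ K := hc (mem_closedBall_self hs.le)
      have hc2 : c + s • u ∈ K := hc (by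
        rw [mem_closedBall, dist_eq_norm, add_sub_cancel_left, norm_smul, hu]
        simp [abs_of_pos hs])
      have h1 : ‖c‖ ≤ max R 0 := by
        have := mem_closedBall.1 ((hR.trans (closedBall_subset_closedBall (le_max_left R 0))) hc1)
        rwa [dist_zero_right] at this
      have h2 : ‖c + s • u‖ ≤ max R 0 := by
        have := mem_closedBall.1 ((hR.trans (closedBall_subset_closedBall (le_max_left R 0))) hc2)
        rwa [dist_zero_right] at this
      have : s = ‖(c + s • u) - c‖ := by
        rw [add_sub_cancel_left, norm_smul, hu]
        simp [abs_of_pos hs]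
      calc s = ‖(c + s • u) - c‖ := this
      _ ≤ ‖c + s • u‖ + ‖c‖ := norm_sub_le _ _
      _ ≤ 2 * max R 0 := by linarith
  have : r + δ' / 2 ≤ inradius K :=
    le_csSup hbdd ⟨o - ε • u, hin⟩
  linarith
end
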